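/- Fix ν, d ≥ 1 and k ∈ ℕ, and let C_k ⊆ M_ν(ℝ[x₁,…,x_d]) be the set of all finite sums Σ_i Gᵢᵀ Gᵢ where each Gᵢ ∈ M_ν(ℝ[x₁,…,x_d]) has all entries of total degree at most k. Then C_k is closed under coefficientwise limits: if (F_n) is a sequence in C_k and F ∈ M_ν(ℝ[x₁,…,x_d]) is such that for every pair of indices (i,j) and every monomial m the coefficient of m in the (i,j) entry of F_n converges, as n → ∞, to the coefficient of m in the (i,j) entry of F, then F ∈ C_k. -/

import Mathlib

open MvPolynomial Matrix Filter Topology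
set_option maxHeartbeats 1000000
set_option synthInstance.maxHeartbeats 400000

namespace Stmt11
noncomputable section
variable (d k : ℕ)

abbrev V : Submodule ℝ (MvPolynomial (Fin d) ℝ) := MvPolynomial.restrictTotalDegree (Fin d) ℝ k

abbrev NB : ℕ := Module.finrank ℝ (V d k)

def bb : Module.Basis (Fin (NB d k)) ℝ (V d k) := Module.finBasis ℝ (V d k)

variable (ν : ℕ)

/-- the Gram-encoding map -/
def Psi (Q : Matrix (Fin ν × Fin (NB d k)) (Fin ν × Fin (NB d k)) ℝ) :
    Matrix (Fin ν) (Fin ν) (MvPolynomial (Fin d) ℝ) :=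
  fun p q => ∑ α, ∑ β, Q (p, α) (q, β) •
    ((bb d k α : MvPolynomial (Fin d) ℝ) * (bb d k β : MvPolynomial (Fin d) ℝ))

variable {d k ν}

/-- "row polynomial vector" of a rectangular matrix -/
def wV {ι : Type*} (A : Matrix ι (Fin ν × Fin (NB d k)) ℝ) (s : ι) (p : Fin ν) : V d k :=
  ∑ α, A s (p, α) • bb d k α

lemma sum_comm3 {a b c M : Type*} [AddCommMonoid M] [Fintype a] [Fintype b] [Fintype c]
    (f : a → b → c → M) : ∑ x, ∑ y, ∑ z, f x y z = ∑ z, ∑ x, ∑ y, f x y z :=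
  (Finset.sum_congr rfl fun _ _ => Finset.sum_comm).trans Finset.sum_comm

lemma coeff_psi (Q : Matrix (Fin ν × Fin (NB d k)) (Fin ν × Fin (NB d k)) ℝ)
    (p q : Fin ν) (m : Fin d →₀ ℕ) :
    MvPolynomial.coeff m (Psi d k ν Q p q)
      = ∑ α, ∑ β, Q (p, α) (q, β) *
          MvPolynomial.coeff m ((bb d k α : MvPolynomial (Fin d) ℝ) * (bb d k β : MvPolynomial (Fin d) ℝ)) := by
  simp [Psi, MvPolynomial.coeff_sum, MvPolynomial.coeff_smul, smul_eq_mul]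

lemma psi_transpose_mul_self {ι : Type*} [Fintype ι]
    (A : Matrix ι (Fin ν × Fin (NB d k)) ℝ) (p q : Fin ν) :
    Psi d k ν (Aᵀ * A) p q
      = ∑ s : ι, ((wV A s p : MvPolynomial (Fin d) ℝ) * (wV A s q : MvPolynomial (Fin d) ℝ)) := by
  unfold Psi wV
  push_cast [Submodule.coe_sum]
  calc (∑ α, ∑ β, (Aᵀ * A) (p, α) (q, β) •
        ((bb d k α : MvPolynomial (Fin d) ℝ) * (bb d k β : MvPolynomial (Fin d) ℝ)))
      = ∑ α, ∑ β, ∑ s : ι, (A s (p, α) * A s (q, β)) •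
        ((bb d k α : MvPolynomial (Fin d) ℝ) * (bb d k β : MvPolynomial (Fin d) ℝ)) := by
        simp [Matrix.mul_apply, Finset.sum_smul]
    _ = ∑ s : ι, ∑ α, ∑ β, (A s (p, α) * A s (q, β)) •
        ((bb d k α : MvPolynomial (Fin d) ℝ) * (bb d k β : MvPolynomial (Fin d) ℝ)) := by
        exact sum_comm3 _
    _ = ∑ s : ι, (∑ α, A s (p, α) • (bb d k α : MvPolynomial (Fin d) ℝ))
          * (∑ β, A s (q, β) • (bb d k β : MvPolynomial (Fin d) ℝ)) := by
        refine Finset.sum_congr rfl fun s _ => ?_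
        rw [Finset.sum_mul]
        refine Finset.sum_congr rfl fun α _ => ?_
        rw [Finset.mul_sum]
        refine Finset.sum_congr rfl fun β _ => ?_
        rw [smul_mul_assoc, mul_smul_comm, smul_smul]
lemma totalDegree_coe (v : V d k) : (v : MvPolynomial (Fin d) ℝ).totalDegree ≤ k :=
  (MvPolynomial.mem_restrictTotalDegree _ k _).1 v.2

/-- Lemma B: PSD Gram matrix gives a sum-of-squares representation. -/
lemma exists_rep_of_psd (hν : 1 ≤ ν) {Q : Matrix (Fin ν × Fin (NB d k)) (Fin ν × Fin (NB d k)) ℝ}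
    (hQ : Q.PosSemidef) :
    ∃ (m : ℕ) (G : Fin m → Matrix (Fin ν) (Fin ν) (MvPolynomial (Fin d) ℝ)),
      (∀ (i : Fin m) (p q : Fin ν), (G i p q).totalDegree ≤ k) ∧
      Psi d k ν Q = ∑ i, (G i)ᵀ * G i := by
  classical
  obtain ⟨A, hA⟩ : ∃ B : Matrix (Fin ν × Fin (NB d k)) (Fin ν × Fin (NB d k)) ℝ, Q = Bᴴ * B := by
    open scoped MatrixOrder in
    exact ⟨CFC.sqrt Q, by rw [(Matrix.nonneg_iff_posSemidef.mp (CFC.sqrt_nonneg Q)).isHermitian.eq, eq_comm, CFC.sqrt_mul_sqrt_self Q hQ.nonneg]⟩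
  rw [Matrix.conjTranspose_eq_transpose_of_trivial] at hA
  let e := (Fintype.equivFin (Fin ν × Fin (NB d k))).symm
  let p0 : Fin ν := ⟨0, hν⟩
  refine ⟨Fintype.card (Fin ν × Fin (NB d k)), fun r p q =>
    if p = p0 then (wV A (e r) q : MvPolynomial (Fin d) ℝ) else 0, ?_, ?_⟩
  · intro i p q
    by_cases h : p = p0 <;> simp [h, totalDegree_coe]
  · funext p q
    rw [hA, Matrix.sum_apply, psi_transpose_mul_self]
    rw [← e.sum_comp (fun s : Fin ν × Fin (NB d k) => ((wV A s p : MvPolynomial (Fin d) ℝ) * (wV A s q : MvPolynomial (Fin d) ℝ)))]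
    refine Finset.sum_congr rfl fun r _ => ?_
    erw [Matrix.mul_apply]
    rw [Finset.sum_eq_single p0]
    · simp [Matrix.transpose_apply, p0]
      left
      show _ = if (⟨0, hν⟩ : Fin ν) = ⟨0, hν⟩ then (wV A (e r) p : MvPolynomial (Fin d) ℝ) else 0
      rw [if_pos rfl]
    · intro s _ hs
      simp [Matrix.transpose_apply, hs]
    · simp

/-- Lemma A: a sum-of-squares representation gives a PSD Gram matrix. -/
lemma exists_psd_of_rep {m : ℕ} {G : Fin m → Matrix (Fin ν) (Fin ν) (MvPolynomial (Fin d) ℝ)}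
    (hdeg : ∀ (i : Fin m) (p q : Fin ν), (G i p q).totalDegree ≤ k) :
    ∃ Q : Matrix (Fin ν × Fin (NB d k)) (Fin ν × Fin (NB d k)) ℝ,
      Q.PosSemidef ∧ Psi d k ν Q = ∑ i, (G i)ᵀ * G i := by
  classical
  let gV : Fin m → Fin ν → Fin ν → V d k := fun i p q =>
    ⟨G i p q, (MvPolynomial.mem_restrictTotalDegree _ k _).2 (hdeg i p q)⟩
  let A : Matrix (Fin m × Fin ν) (Fin ν × Fin (NB d k)) ℝ := fun ir qβ =>
    (bb d k).repr (gV ir.1 ir.2 qβ.1) qβ.2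
  have hw : ∀ (ir : Fin m × Fin ν) (p : Fin ν), wV A ir p = gV ir.1 ir.2 p := by
    intro ir p
    simpa [wV, A] using (bb d k).sum_repr (gV ir.1 ir.2 p)
  refine ⟨Aᵀ * A, ?_, ?_⟩
  · have := Matrix.posSemidef_conjTranspose_mul_self A
    rwa [Matrix.conjTranspose_eq_transpose_of_trivial] at this
  · funext p q
    rw [psi_transpose_mul_self, Matrix.sum_apply]
    rw [Fintype.sum_prod_type]
    refine Finset.sum_congr rfl fun i _ => ?_
    rw [Matrix.mul_apply]
    refine Finset.sum_congr rfl fun r _ => ?_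
    rw [hw, hw]
    simp [gV, Matrix.transpose_apply]

/-- kernel triviality -/
lemma eq_zero_of_psi_eq_zero {Q : Matrix (Fin ν × Fin (NB d k)) (Fin ν × Fin (NB d k)) ℝ}
    (hQ : Q.PosSemidef) (h0 : Psi d k ν Q = 0) : Q = 0 := by
  classical
  obtain ⟨A, hA⟩ : ∃ B : Matrix (Fin ν × Fin (NB d k)) (Fin ν × Fin (NB d k)) ℝ, Q = Bᴴ * B := by
    open scoped MatrixOrder in
    exact ⟨CFC.sqrt Q, by rw [(Matrix.nonneg_iff_posSemidef.mp (CFC.sqrt_nonneg Q)).isHermitian.eq, eq_comm, CFC.sqrt_mul_sqrt_self Q hQ.nonneg]⟩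
  rw [Matrix.conjTranspose_eq_transpose_of_trivial] at hA
  have hAz : A = 0 := by
    have hw : ∀ (s : Fin ν × Fin (NB d k)) (p : Fin ν), wV A s p = 0 := by
      intro s p
      have hsum : ∀ x : Fin d → ℝ,
          ∑ t : Fin ν × Fin (NB d k), (MvPolynomial.eval x (wV A t p : MvPolynomial (Fin d) ℝ))^2 = 0 := by
        intro x
        have : Psi d k ν Q p p = 0 := by rw [h0]; rfl
        rw [hA, psi_transpose_mul_self] at this
        have := congrArg (MvPolynomial.eval x) this
        simpa [sq] using this
      have hz : ∀ x : Fin d → ℝ, MvPolynomial.eval x (wV A s p : MvPolynomial (Fin d) ℝ) = 0 := by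
        intro x
        have h := hsum x
        have := (Finset.sum_eq_zero_iff_of_nonneg (fun t _ => sq_nonneg _)).1 h s (Finset.mem_univ _)
        exact pow_eq_zero_iff (two_ne_zero) |>.1 this
      have : (wV A s p : MvPolynomial (Fin d) ℝ) = 0 :=
        MvPolynomial.funext (fun x => by simpa using hz x)
      exact Subtype.ext (by simpa using this)
    funext s pα
    have h1 : ∑ α, A s (pα.1, α) • bb d k α = 0 := hw s pα.1
    have h2 := (Fintype.linearIndependent_iff.mp (bb d k).linearIndependent
      (fun α => A s (pα.1, α)) h1) pα.2
    simpa using h2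
  rw [hA, hAz]
  simp

section PsdHelpers
variable {n : Type*} [Fintype n] [DecidableEq n] {Q : Matrix n n ℝ}

lemma psd_smul (h : Q.PosSemidef) {c : ℝ} (hc : 0 ≤ c) : (c • Q).PosSemidef := by
  constructor
  · have h1 := h.1
    unfold Matrix.IsHermitian at *
    rw [Matrix.conjTranspose_smul, h1, star_trivial]
  · exact (h.smul hc).2

lemma psd_quad (h : Q.PosSemidef) (x : n → ℝ) : 0 ≤ x ⬝ᵥ Q *ᵥ x := by
  simpa using h.dotProduct_mulVec_nonneg x

lemma psd_diag_nonneg (h : Q.PosSemidef) (a : n) : 0 ≤ Q a a := by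
  have := psd_quad h (Pi.single a 1)
  simpa [Matrix.mulVec_single, dotProduct_single] using this

lemma psd_trace_nonneg (h : Q.PosSemidef) : 0 ≤ Q.trace :=
  Finset.sum_nonneg fun i _ => psd_diag_nonneg h i

lemma psd_symm_entry (h : Q.PosSemidef) (a b : n) : Q b a = Q a b := by
  have := congrFun (congrFun h.1 b) a
  simpa [Matrix.conjTranspose_apply] using this.symm

lemma psd_abs_entry_le_trace (h : Q.PosSemidef) (a b : n) : |Q a b| ≤ Q.trace := by
  have hdiag : ∀ i, 0 ≤ Q i i := psd_diag_nonneg h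
  by_cases hab : a = b
  · subst hab
    rw [abs_of_nonneg (hdiag a)]
    exact Finset.single_le_sum (fun i _ => hdiag i) (Finset.mem_univ a)
  · have key : ∀ c : ℝ, 0 ≤ Q a a + c * Q a b + c * Q b a + c * c * Q b b := by
      intro c
      have := psd_quad h (Pi.single a 1 + Pi.single b c)
      rw [Matrix.mulVec_add, add_dotProduct, dotProduct_add,
        dotProduct_add] at this
      simp only [Matrix.mulVec_single, single_dotProduct, Pi.smul_apply, Matrix.col_apply, op_smul_eq_mul, one_mul, mul_one] at this
      nlinarith [this]
    have h1 := key 1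
    have h2 := key (-1)
    have hsym := psd_symm_entry h a b
    have habs : |Q a b| ≤ Q a a + Q b b := by
      rw [abs_le]; constructor <;> nlinarith [hdiag a, hdiag b]
    have hsum : Q a a + Q b b ≤ Q.trace := by
      have : ∑ i ∈ ({a, b} : Finset n), Q i i ≤ ∑ i, Q i i :=
        Finset.sum_le_sum_of_subset_of_nonneg (Finset.subset_univ _)
          (fun i _ _ => hdiag i)
      rwa [Finset.sum_pair hab] at this
    linarith

end PsdHelpers

instance matFCT {n m : Type*} [Countable n] [Countable m] :
    FirstCountableTopology (Matrix n m ℝ) :=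
  inferInstanceAs (FirstCountableTopology (n → m → ℝ))

lemma psi_smul_coeff (c : ℝ) (Q : Matrix (Fin ν × Fin (NB d k)) (Fin ν × Fin (NB d k)) ℝ)
    (p q : Fin ν) (m : Fin d →₀ ℕ) :
    MvPolynomial.coeff m (Psi d k ν (c • Q) p q) = c * MvPolynomial.coeff m (Psi d k ν Q p q) := by
  simp [coeff_psi, Matrix.smul_apply, smul_eq_mul, Finset.mul_sum, mul_assoc]

lemma psd_closed_limit
    (F : Matrix (Fin ν) (Fin ν) (MvPolynomial (Fin d) ℝ))
    (Qn : ℕ → Matrix (Fin ν × Fin (NB d k)) (Fin ν × Fin (NB d k)) ℝ)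
    (hpsd : ∀ n, (Qn n).PosSemidef)
    (hconv : ∀ (p q : Fin ν) (m : Fin d →₀ ℕ),
      Tendsto (fun n : ℕ => MvPolynomial.coeff m (Psi d k ν (Qn n) p q)) atTop
        (nhds (MvPolynomial.coeff m (F p q)))) :
    ∃ Q : Matrix (Fin ν × Fin (NB d k)) (Fin ν × Fin (NB d k)) ℝ,
      Q.PosSemidef ∧ Psi d k ν Q = F := by
  classical
  let t : ℕ → ℝ := fun n => (Qn n).trace
  have ht0 : ∀ n, 0 ≤ t n := fun n => psd_trace_nonneg (hpsd n)
  have h1t : ∀ n, 0 < 1 + t n := fun n => by linarith [ht0 n]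
  let c : ℕ → ℝ := fun n => (1 + t n)⁻¹
  have hcpos : ∀ n, 0 < c n := fun n => inv_pos.2 (h1t n)
  have hcle : ∀ n, c n ≤ 1 := fun n => inv_le_one_of_one_le₀ (by linarith [ht0 n])
  let R : ℕ → Matrix (Fin ν × Fin (NB d k)) (Fin ν × Fin (NB d k)) ℝ := fun n => c n • Qn n
  have hRpsd : ∀ n, (R n).PosSemidef := fun n => psd_smul (hpsd n) (hcpos n).le
  have hRbound : ∀ n a b, R n a b ∈ Set.Icc (-1 : ℝ) 1 := by
    intro n a b
    have h1 : |Qn n a b| ≤ t n := psd_abs_entry_le_trace (hpsd n) a b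
    have h2 : |R n a b| ≤ 1 := by
      have : |R n a b| = c n * |Qn n a b| := by
        simp [R, Matrix.smul_apply, abs_mul, abs_of_pos (hcpos n), smul_eq_mul]
      rw [this]
      calc c n * |Qn n a b| ≤ c n * (1 + t n) :=
            mul_le_mul_of_nonneg_left (by linarith [h1]) (hcpos n).le
        _ = 1 := inv_mul_cancel₀ (h1t n).ne'
      -- fix: h1 has no argument
    exact ⟨neg_le_of_abs_le h2, le_of_abs_le h2⟩
  let K : Set (Matrix (Fin ν × Fin (NB d k)) (Fin ν × Fin (NB d k)) ℝ) :=
    Set.pi Set.univ (fun _ : Fin ν × Fin (NB d k) => Set.pi Set.univ (fun _ : Fin ν × Fin (NB d k) => Set.Icc (-1 : ℝ) 1))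
  have hKc : IsCompact K :=
    isCompact_univ_pi fun _ => isCompact_univ_pi fun _ => isCompact_Icc
  have hKmem : ∀ n, R n ∈ K := by
    intro n a _ b _
    exact hRbound n a b
  have hIcc : ∀ n, c n ∈ Set.Icc (0 : ℝ) 1 := fun n => ⟨(hcpos n).le, hcle n⟩
  obtain ⟨⟨L, cinf⟩, hLmem, φ, hφ, hten⟩ :=
    (hKc.prod isCompact_Icc).tendsto_subseq
      (x := fun n => ((R n, c n) : Matrix (Fin ν × Fin (NB d k)) (Fin ν × Fin (NB d k)) ℝ × ℝ))
      (fun n => Set.mk_mem_prod (hKmem n) (hIcc n))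
  have hRL : ∀ a b, Tendsto (fun n => R (φ n) a b) atTop (𝓝 (L a b)) := by
    intro a b
    have h1 : Tendsto (fun n => R (φ n)) atTop (𝓝 L) :=
      (continuous_fst.tendsto _).comp hten
    exact tendsto_pi_nhds.mp (tendsto_pi_nhds.mp h1 a) b
  have hcinf : Tendsto (fun n => c (φ n)) atTop (𝓝 cinf) :=
    (continuous_snd.tendsto _).comp hten
  have hcinf0 : 0 ≤ cinf := by
    have : cinf ∈ Set.Icc (0:ℝ) 1 := hLmem.2
    exact this.1
  -- L is PSD
  have hLpsd : L.PosSemidef := by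
    refine Matrix.PosSemidef.of_dotProduct_mulVec_nonneg ?_ ?_
    · funext a b
      rw [Matrix.conjTranspose_apply, star_trivial]
      have h1 : Tendsto (fun n => R (φ n) b a) atTop (𝓝 (L b a)) := hRL b a
      have h2 : Tendsto (fun n => R (φ n) b a) atTop (𝓝 (L a b)) := by
        have heq : (fun n => R (φ n) b a) = fun n => R (φ n) a b := by
          funext n; exact psd_symm_entry (hRpsd (φ n)) a b
        rw [heq]; exact hRL a b
      exact tendsto_nhds_unique h1 h2
    · intro x
      have hquad : Tendsto (fun n => x ⬝ᵥ R (φ n) *ᵥ x) atTop (𝓝 (x ⬝ᵥ L *ᵥ x)) := by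
        simp only [dotProduct, Matrix.mulVec]
        refine tendsto_finset_sum _ fun a _ => Tendsto.const_mul _ ?_
        exact tendsto_finset_sum _ fun b _ => (hRL a b).mul_const _
      have hnn : ∀ n, 0 ≤ x ⬝ᵥ R (φ n) *ᵥ x := fun n => psd_quad (hRpsd (φ n)) x
      have := ge_of_tendsto' hquad hnn
      simpa using this
  -- trace of L is 1 - cinf
  have htrR : ∀ n, (R n).trace = 1 - c n := by
    intro n
    have : (R n).trace = c n * t n := by
      simp [R, t, Matrix.trace_smul, smul_eq_mul]
    rw [this]
    have h := (h1t n).ne'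
    show (1 + t n)⁻¹ * t n = 1 - (1 + t n)⁻¹
    field_simp
    ring
  have htrL : L.trace = 1 - cinf := by
    have h1 : Tendsto (fun n => (R (φ n)).trace) atTop (𝓝 L.trace) := by
      simp only [Matrix.trace, Matrix.diag]
      exact tendsto_finset_sum _ fun a _ => hRL a a
    have h2 : Tendsto (fun n => (R (φ n)).trace) atTop (𝓝 (1 - cinf)) := by
      simp only [htrR]
      exact tendsto_const_nhds.sub hcinf
    exact tendsto_nhds_unique h1 h2
  -- coefficients of Psi L
  have hkey : ∀ (p q : Fin ν) (m : Fin d →₀ ℕ),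
      MvPolynomial.coeff m (Psi d k ν L p q) = cinf * MvPolynomial.coeff m (F p q) := by
    intro p q m
    have h1 : Tendsto (fun n => MvPolynomial.coeff m (Psi d k ν (R (φ n)) p q)) atTop
        (𝓝 (MvPolynomial.coeff m (Psi d k ν L p q))) := by
      simp only [coeff_psi]
      refine tendsto_finset_sum _ fun α _ => tendsto_finset_sum _ fun β _ => ?_
      exact ((hRL (p, α) (q, β))).mul_const _
    have h2 : Tendsto (fun n => MvPolynomial.coeff m (Psi d k ν (R (φ n)) p q)) atTop
        (𝓝 (cinf * MvPolynomial.coeff m (F p q))) := by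
      have heq : (fun n => MvPolynomial.coeff m (Psi d k ν (R (φ n)) p q))
          = fun n => c (φ n) * MvPolynomial.coeff m (Psi d k ν (Qn (φ n)) p q) := by
        funext n; exact psi_smul_coeff _ _ _ _ _
      rw [heq]
      exact hcinf.mul ((hconv p q m).comp (hφ.tendsto_atTop))
    exact tendsto_nhds_unique h1 h2
  by_cases hc : cinf = 0
  · exfalso
    have hPsiL : Psi d k ν L = 0 := by
      funext p q
      apply MvPolynomial.ext
      intro m
      simp [hkey p q m, hc]
    have hL0 : L = 0 := eq_zero_of_psi_eq_zero hLpsd hPsiL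
    rw [hL0] at htrL
    simp [hc] at htrL
  · refine ⟨cinf⁻¹ • L, psd_smul hLpsd (inv_nonneg.2 hcinf0), ?_⟩
    funext p q
    apply MvPolynomial.ext
    intro m
    rw [psi_smul_coeff, hkey p q m, ← mul_assoc, inv_mul_cancel₀ hc, one_mul]

end
end Stmt11

/-- The cone `C_k` of finite sums `Σ Gᵢᵀ Gᵢ`, where each `Gᵢ` is a
`ν × ν` matrix polynomial all of whose entries have total degree at most `k`, is closed
under coefficientwise limits. -/
theorem statement11 (ν d : ℕ) (hν : 1 ≤ ν) (hd : 1 ≤ d) (k : ℕ)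
    (Fseq : ℕ → Matrix (Fin ν) (Fin ν) (MvPolynomial (Fin d) ℝ))
    (F : Matrix (Fin ν) (Fin ν) (MvPolynomial (Fin d) ℝ))
    (hmem : ∀ n : ℕ, ∃ (m : ℕ)
        (G : Fin m → Matrix (Fin ν) (Fin ν) (MvPolynomial (Fin d) ℝ)),
        (∀ (i : Fin m) (p q : Fin ν), (G i p q).totalDegree ≤ k) ∧
        Fseq n = ∑ i, (G i)ᵀ * G i)
    (hconv : ∀ (i j : Fin ν) (m : Fin d →₀ ℕ),
        Tendsto (fun n : ℕ => MvPolynomial.coeff m (Fseq n i j)) atTop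
          (nhds (MvPolynomial.coeff m (F i j)))) :
    ∃ (m : ℕ) (G : Fin m → Matrix (Fin ν) (Fin ν) (MvPolynomial (Fin d) ℝ)),
      (∀ (i : Fin m) (p q : Fin ν), (G i p q).totalDegree ≤ k) ∧
      F = ∑ i, (G i)ᵀ * G i := by
  classical
  have hex : ∀ n : ℕ, ∃ Q : Matrix (Fin ν × Fin (Stmt11.NB d k)) (Fin ν × Fin (Stmt11.NB d k)) ℝ,
      Q.PosSemidef ∧ Stmt11.Psi d k ν Q = Fseq n := by
    intro n
    obtain ⟨m, G, hdeg, hrep⟩ := hmem n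
    obtain ⟨Q, hQ, hPsi⟩ := Stmt11.exists_psd_of_rep hdeg
    exact ⟨Q, hQ, hPsi.trans hrep.symm⟩
  choose Qfun hQpsd hQeq using hex
  obtain ⟨Q, hQ, hPsiF⟩ := Stmt11.psd_closed_limit F Qfun hQpsd (by
    intro p q m
    simp only [hQeq]
    exact hconv p q m)
  obtain ⟨m, G, hdeg, hrep⟩ := Stmt11.exists_rep_of_psd hν hQ
  exact ⟨m, G, hdeg, by rw [← hPsiF, hrep]⟩
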